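/- Let $T \subset \mathbb{R}^d$ be finite with weight function $w$, $w(T) > 0$, and let $\lambda^*$ be such that for every unit vector $v$, $\frac{1}{w(T)}\sum_{x\in T} w(x)(v\cdot(x - \mu_w(T)))^2 \le 2\lambda^*$. Let $S \subseteq T$ with $w(S) \ge \alpha w(T)/2$ and $w(S) \ge 3|S|/4$, and suppose the uniform (unweighted) variance of $v \cdot S$ is at most 1 for every unit vector $v$ (i.e., $\mathrm{Cov}[S] \preceq I$). Then $\|\mu(S) - \mu_w(T)\|_2 \le 1 + \sqrt{16\lambda^*/\alpha}$, where $\mu(S)$ is the unweighted mean of $S$. -/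

import Mathlib

open Finset
open scoped RealInnerProductSpace

set_option maxHeartbeats 1600000 in
/-- If the weighted second moments of `T` around its weighted mean are at most `2λ*` in every
direction, `S` carries at least an `α/2` fraction of the weight and most of its own mass, and
the inliers `S` have covariance at most `I`, then the unweighted mean of `S` is within
`1 + √(16λ*/α)` of the weighted mean of `T`. -/
theorem stmt15 {d : ℕ} (T S : Finset (EuclideanSpace ℝ (Fin d))) (hST : S ⊆ T)
    (w : EuclideanSpace ℝ (Fin d) → ℝ)
    (hw : ∀ x ∈ T, 0 ≤ w x ∧ w x ≤ 1) (hT : 0 < ∑ x ∈ T, w x)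
    (a lam : ℝ) (ha : 0 < a)
    (μwT : EuclideanSpace ℝ (Fin d))
    (hμwT : μwT = (∑ x ∈ T, w x)⁻¹ • ∑ x ∈ T, w x • x)
    (hlam : ∀ v : EuclideanSpace ℝ (Fin d), ‖v‖ = 1 →
      (∑ x ∈ T, w x)⁻¹ * ∑ x ∈ T, w x * ⟪v, x - μwT⟫ ^ 2 ≤ 2 * lam)
    (hwS : a * (∑ x ∈ T, w x) / 2 ≤ ∑ x ∈ S, w x)
    (hwS2 : 3 * S.card / 4 ≤ ∑ x ∈ S, w x)
    (μS : EuclideanSpace ℝ (Fin d))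
    (hμS : μS = (S.card : ℝ)⁻¹ • ∑ x ∈ S, x)
    (hcov : ∀ v : EuclideanSpace ℝ (Fin d), ‖v‖ = 1 →
      (S.card : ℝ)⁻¹ * ∑ x ∈ S, ⟪v, x - μS⟫ ^ 2 ≤ 1) :
    ‖μS - μwT‖ ≤ 1 + Real.sqrt (16 * lam / a) := by
  classical
  have hRHS : (0:ℝ) ≤ 1 + Real.sqrt (16 * lam / a) := by positivity
  by_cases hne : μS = μwT
  · simpa [hne] using hRHS
  set W := ∑ x ∈ T, w x with hW
  set wS := ∑ x ∈ S, w x with hwSdef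
  have hw0 : ∀ x ∈ S, 0 ≤ w x := fun x hx => (hw x (hST hx)).1
  have hwS0 : 0 < wS := lt_of_lt_of_le (by positivity) hwS
  have hcard : wS ≤ (S.card : ℝ) := by
    calc wS ≤ ∑ _x ∈ S, (1:ℝ) := Finset.sum_le_sum (fun x hx => (hw x (hST hx)).2)
    _ = (S.card : ℝ) := by simp
  set n := (S.card : ℝ) with hn_def
  have hn : 0 < n := lt_of_lt_of_le hwS0 hcard
  set D := ‖μS - μwT‖ with hDdef
  have hD : 0 < D := norm_pos_iff.mpr (sub_ne_zero.mpr hne)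
  set v := D⁻¹ • (μS - μwT) with hvdef
  have hv : ‖v‖ = 1 := by
    rw [hvdef, norm_smul, norm_inv, norm_norm, ← hDdef, inv_mul_cancel₀ hD.ne']
  set f := fun x : EuclideanSpace ℝ (Fin d) => ⟪v, x - μwT⟫ with hf
  set g := fun x : EuclideanSpace ℝ (Fin d) => ⟪v, x - μS⟫ with hg
  have hfg : ∀ x, f x = g x + D := by
    intro x
    have hx : x - μwT = (x - μS) + (μS - μwT) := by abel
    rw [hf, hg]
    simp only [hx, inner_add_right]
    congr 1
    rw [hvdef, real_inner_smul_left, real_inner_self_eq_norm_sq, ← hDdef]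
    field_simp
  have hsumx : ∑ x ∈ S, (x : EuclideanSpace ℝ (Fin d)) = n • μS := by
    rw [hμS, smul_smul, mul_inv_cancel₀ hn.ne', one_smul]
  have hsum_g : ∑ x ∈ S, g x = 0 := by
    have : ∀ x, g x = ⟪v, x⟫ - ⟪v, μS⟫ := fun x => by rw [hg]; simp [inner_sub_right]
    simp only [this]
    rw [Finset.sum_sub_distrib, ← inner_sum, hsumx, real_inner_smul_right,
      Finset.sum_const, nsmul_eq_mul, ← hn_def, sub_self]
  have hsum_f : ∑ x ∈ S, f x = n * D := by
    simp only [hfg]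
    rw [Finset.sum_add_distrib, hsum_g, zero_add, Finset.sum_const, nsmul_eq_mul, ← hn_def]
  -- covariance bound
  have hcovS : ∑ x ∈ S, g x ^ 2 ≤ n := by
    have h := hcov v hv
    have h2 := mul_le_mul_of_nonneg_left h hn.le
    rwa [mul_one, ← mul_assoc, mul_inv_cancel₀ hn.ne', one_mul] at h2
  -- lambda nonneg
  have hlam0 : 0 ≤ lam := by
    have h := hlam v hv
    have hpos : 0 ≤ W⁻¹ * ∑ x ∈ T, w x * ⟪v, x - μwT⟫ ^ 2 := by
      apply mul_nonneg (by positivity)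
      exact Finset.sum_nonneg fun x hx => mul_nonneg (hw x hx).1 (sq_nonneg _)
    linarith
  -- weighted second moment bound on S
  have hTsum : ∑ x ∈ T, w x * f x ^ 2 ≤ 2 * lam * W := by
    have h := hlam v hv
    have h2 := mul_le_mul_of_nonneg_left h hT.le
    rw [← mul_assoc, mul_inv_cancel₀ hT.ne', one_mul] at h2
    simpa [hf, mul_comm] using h2
  have hSsumf : ∑ x ∈ S, w x * f x ^ 2 ≤ 2 * lam * W :=
    le_trans (Finset.sum_le_sum_of_subset_of_nonneg hST
      (fun x hx _ => mul_nonneg (hw x hx).1 (sq_nonneg _))) hTsum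
  have hWle : W ≤ 2 * wS / a := by
    rw [le_div_iff₀ ha]; nlinarith [hwS]
  have hSsumf' : ∑ x ∈ S, w x * f x ^ 2 ≤ (4 * lam / a) * wS := by
    calc ∑ x ∈ S, w x * f x ^ 2 ≤ 2 * lam * W := hSsumf
    _ ≤ 2 * lam * (2 * wS / a) := mul_le_mul_of_nonneg_left hWle (by linarith)
    _ = (4 * lam / a) * wS := by field_simp; ring
  -- Cauchy-Schwarz for the weighted average A
  set A := wS⁻¹ * ∑ x ∈ S, w x * f x with hA
  have hA2 : A ^ 2 ≤ 4 * lam / a := by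
    have hcs : (∑ x ∈ S, w x * f x) ^ 2 ≤ wS * ∑ x ∈ S, w x * f x ^ 2 := by
      have h := Finset.sum_mul_sq_le_sq_mul_sq S (fun x => Real.sqrt (w x))
        (fun x => Real.sqrt (w x) * f x)
      have e1 : ∀ x ∈ S, Real.sqrt (w x) * (Real.sqrt (w x) * f x) = w x * f x := by
        intro x hx
        rw [← mul_assoc, Real.mul_self_sqrt (hw0 x hx)]
      have e2 : ∀ x ∈ S, Real.sqrt (w x) ^ 2 = w x := fun x hx => Real.sq_sqrt (hw0 x hx)
      have e3 : ∀ x ∈ S, (Real.sqrt (w x) * f x) ^ 2 = w x * f x ^ 2 := by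
        intro x hx
        rw [mul_pow, Real.sq_sqrt (hw0 x hx)]
      rwa [Finset.sum_congr rfl e1, Finset.sum_congr rfl e2, Finset.sum_congr rfl e3] at h
    have h1 : (∑ x ∈ S, w x * f x) ^ 2 ≤ (4 * lam / a) * wS ^ 2 := by
      calc (∑ x ∈ S, w x * f x) ^ 2 ≤ wS * ∑ x ∈ S, w x * f x ^ 2 := hcs
      _ ≤ wS * ((4 * lam / a) * wS) := mul_le_mul_of_nonneg_left hSsumf' hwS0.le
      _ = (4 * lam / a) * wS ^ 2 := by ring
    rw [hA, mul_pow]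
    calc wS⁻¹ ^ 2 * (∑ x ∈ S, w x * f x) ^ 2 ≤ wS⁻¹ ^ 2 * ((4 * lam / a) * wS ^ 2) :=
      mul_le_mul_of_nonneg_left h1 (by positivity)
    _ = 4 * lam / a := by field_simp
  have hAle : A ≤ Real.sqrt (16 * lam / a) := by
    calc A ≤ |A| := le_abs_self A
    _ = Real.sqrt (A ^ 2) := (Real.sqrt_sq_eq_abs A).symm
    _ ≤ Real.sqrt (16 * lam / a) := Real.sqrt_le_sqrt
        (hA2.trans ((div_le_div_iff_of_pos_right ha).mpr (by linarith)))
  -- the coefficients c x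
  have hc0 : ∑ x ∈ S, (n⁻¹ - w x / wS) = 0 := by
    rw [Finset.sum_sub_distrib, Finset.sum_const, ← Finset.sum_div, nsmul_eq_mul, ← hn_def,
      ← hwSdef, mul_inv_cancel₀ hn.ne', div_self hwS0.ne', sub_self]
  have h1 : D - A = ∑ x ∈ S, (n⁻¹ - w x / wS) * f x := by
    have e : ∀ x ∈ S, (n⁻¹ - w x / wS) * f x = n⁻¹ * f x - wS⁻¹ * (w x * f x) := by
      intro x _; field_simp
    rw [Finset.sum_congr rfl e, Finset.sum_sub_distrib, ← Finset.mul_sum, ← Finset.mul_sum,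
      hsum_f, ← mul_assoc, inv_mul_cancel₀ hn.ne', one_mul, ← hA]
  have h2 : D - A = ∑ x ∈ S, (n⁻¹ - w x / wS) * g x := by
    rw [h1]
    simp only [hfg, mul_add]
    rw [Finset.sum_add_distrib, ← Finset.sum_mul, hc0, zero_mul, add_zero]
  -- bound on the sum of squared coefficients
  have hw2 : ∑ x ∈ S, w x ^ 2 ≤ wS := by
    rw [hwSdef]
    exact Finset.sum_le_sum fun x hx => by
      have h1 := (hw x (hST hx)).1
      have h2 := (hw x (hST hx)).2
      nlinarith
  have hsum_c2 : ∑ x ∈ S, (n⁻¹ - w x / wS) ^ 2 ≤ wS⁻¹ - n⁻¹ := by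
    have e : ∀ x ∈ S, (n⁻¹ - w x / wS) ^ 2 =
        n⁻¹ ^ 2 - (2 * n⁻¹ * wS⁻¹) * w x + wS⁻¹ ^ 2 * w x ^ 2 := by
      intro x _; field_simp; ring
    rw [Finset.sum_congr rfl e]
    rw [Finset.sum_add_distrib, Finset.sum_sub_distrib, Finset.sum_const, ← Finset.mul_sum,
      ← Finset.mul_sum, nsmul_eq_mul, ← hn_def, ← hwSdef]
    have e1 : n * n⁻¹ ^ 2 = n⁻¹ := by field_simp
    have e2 : 2 * n⁻¹ * wS⁻¹ * wS = 2 * n⁻¹ := by field_simp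
    rw [e1, e2]
    have e3 : wS⁻¹ ^ 2 * ∑ x ∈ S, w x ^ 2 ≤ wS⁻¹ := by
      calc wS⁻¹ ^ 2 * ∑ x ∈ S, w x ^ 2 ≤ wS⁻¹ ^ 2 * wS :=
        mul_le_mul_of_nonneg_left hw2 (by positivity)
      _ = wS⁻¹ := by field_simp
    linarith
  have hninv : wS⁻¹ ≤ 2 * n⁻¹ := by
    have h := inv_anti₀ (half_pos hn : (0:ℝ) < n / 2) (by linarith : n / 2 ≤ wS)
    calc wS⁻¹ ≤ (n / 2)⁻¹ := h
    _ = 2 * n⁻¹ := by field_simp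
  have hc2 : ∑ x ∈ S, (n⁻¹ - w x / wS) ^ 2 ≤ n⁻¹ := by linarith
  -- Cauchy-Schwarz for D - A
  have hcs2 : (D - A) ^ 2 ≤ 1 := by
    rw [h2]
    calc (∑ x ∈ S, (n⁻¹ - w x / wS) * g x) ^ 2
        ≤ (∑ x ∈ S, (n⁻¹ - w x / wS) ^ 2) * ∑ x ∈ S, g x ^ 2 :=
          Finset.sum_mul_sq_le_sq_mul_sq S _ _
    _ ≤ n⁻¹ * n := mul_le_mul hc2 hcovS
        (Finset.sum_nonneg fun x _ => sq_nonneg _) (inv_nonneg.mpr hn.le)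
    _ = 1 := inv_mul_cancel₀ hn.ne'
  have hDA : D - A ≤ 1 := by
    calc D - A ≤ |D - A| := le_abs_self _
    _ = Real.sqrt ((D - A) ^ 2) := (Real.sqrt_sq_eq_abs _).symm
    _ ≤ Real.sqrt 1 := Real.sqrt_le_sqrt hcs2
    _ = 1 := Real.sqrt_one
  linarith
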